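/- (NWJ / MINE-f lower bound) For random variables X, Y on finite sets with joint distribution p(x,y) and marginals p(x), p(y), and any function f: X × Y → ℝ, the mutual information satisfies I(X; Y) ≥ E_{p(x,y)}[f(x,y)] - e^{-1} E_{p(x)}E_{p(y)}[e^{f(x,y)}]. -/

import Mathlib

lemma nwj_pointwise (p q t : ℝ) (hp : 0 ≤ p) (hq : 0 ≤ q) (h0 : q = 0 → p = 0) :
    p * t - (Real.exp 1)⁻¹ * (q * Real.exp t) ≤ p * Real.log (p / q) := by
  rcases eq_or_lt_of_le hq with hq0 | hq0
  · have hp0 := h0 hq0.symm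
    simp [hp0, ← hq0]
  rcases eq_or_lt_of_le hp with hp0 | hp0
  · have : 0 ≤ (Real.exp 1)⁻¹ * (q * Real.exp t) := by positivity
    simp [← hp0]; linarith
  · have hpq : 0 < p / q := div_pos hp0 hq0
    have key : (Real.exp 1)⁻¹ * (q * Real.exp t) = p * Real.exp (t - 1 - Real.log (p / q)) := by
      rw [show t - 1 - Real.log (p/q) = t + (-1) + (- Real.log (p/q)) by ring,
        Real.exp_add, Real.exp_add, Real.exp_neg, Real.exp_neg, Real.exp_log hpq]
      field_simp
    rw [key]
    have hb := Real.add_one_le_exp (t - 1 - Real.log (p / q))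
    nlinarith [mul_le_mul_of_nonneg_left hb hp]

/-- NWJ / MINE-f lower bound on mutual information: for any critic `f`,
`I(X;Y) ≥ E_{p(x,y)}[f] - e⁻¹ E_{p(x)}E_{p(y)}[e^f]`, for a joint pmf `p`
on finite sets with marginals `pX`, `pY`. -/
theorem nwj_lower_bound {X Y : Type*} [Fintype X] [Fintype Y]
    (p : X → Y → ℝ) (hnn : ∀ x y, 0 ≤ p x y)
    (hsum : ∑ x : X, ∑ y : Y, p x y = 1)
    (f : X → Y → ℝ) :
    ∑ x : X, ∑ y : Y, p x y *
        Real.log (p x y / ((∑ y' : Y, p x y') * (∑ x' : X, p x' y))) ≥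
      (∑ x : X, ∑ y : Y, p x y * f x y) -
        (Real.exp 1)⁻¹ * ∑ x : X, ∑ y : Y,
          (∑ y' : Y, p x y') * (∑ x' : X, p x' y) * Real.exp (f x y) := by
  rw [ge_iff_le, Finset.mul_sum, ← Finset.sum_sub_distrib]
  apply Finset.sum_le_sum
  intro x _
  rw [Finset.mul_sum, ← Finset.sum_sub_distrib]
  apply Finset.sum_le_sum
  intro y _
  have h := nwj_pointwise (p x y) ((∑ y' : Y, p x y') * (∑ x' : X, p x' y)) (f x y)
    (hnn x y) (mul_nonneg (Finset.sum_nonneg fun y' _ => hnn x y') (Finset.sum_nonneg fun x' _ => hnn x' y)) ?_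
  · linarith [h]
  · intro hq
    rcases mul_eq_zero.mp hq with h1 | h1
    · exact (Finset.sum_eq_zero_iff_of_nonneg (fun y' _ => hnn x y')).mp h1 y (Finset.mem_univ y)
    · exact (Finset.sum_eq_zero_iff_of_nonneg (fun x' _ => hnn x' y)).mp h1 x (Finset.mem_univ x)
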